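/- Let I, J be finite types and let E1 : Matrix I I ℂ → Matrix I I ℂ and E2 : Matrix J J ℂ → Matrix J J ℂ be functions that map every positive semidefinite matrix to a positive semidefinite matrix of the same trace. Then for every expectation B on I × J the judgment qRHL(0, E1, E2, B) holds, where 0 is the zero matrix as preexpectation. [Rule ExFalso] -/

import Mathlib

open Matrix Kronecker ComplexOrder

noncomputable section

/-- Partial trace over the second factor: `tr₂(ρ) i i' = ∑ j, ρ (i,j) (i',j)`. -/
def trB {I J : Type*} [Fintype J] (ρ : Matrix (I × J) (I × J) ℂ) : Matrix I I ℂ :=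
  Matrix.of fun i i' => ∑ j, ρ (i, j) (i', j)

/-- Partial trace over the first factor: `tr₁(ρ) j j' = ∑ i, ρ (i,j) (i,j')`. -/
def trA {I J : Type*} [Fintype I] (ρ : Matrix (I × J) (I × J) ℂ) : Matrix J J ℂ :=
  Matrix.of fun j j' => ∑ i, ρ (i, j) (i, j')

/-- `ρ` is separable iff it is a finite sum of Kronecker products of
positive semidefinite matrices. -/
def Separable {I J : Type*} [Fintype I] [Fintype J]
    (ρ : Matrix (I × J) (I × J) ℂ) : Prop :=
  ∃ (n : ℕ) (σ : Fin n → Matrix I I ℂ) (τ : Fin n → Matrix J J ℂ),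
    (∀ k, (σ k).PosSemidef) ∧ (∀ k, (τ k).PosSemidef) ∧ ρ = ∑ k, σ k ⊗ₖ τ k

/-- The expectation-qRHL judgment `qRHL(A, E1, E2, B)`. -/
def qRHL {I J : Type*} [Fintype I] [Fintype J]
    (A : Matrix (I × J) (I × J) ℂ)
    (E1 : Matrix I I ℂ → Matrix I I ℂ) (E2 : Matrix J J ℂ → Matrix J J ℂ)
    (B : Matrix (I × J) (I × J) ℂ) : Prop :=
  ∀ ρ : Matrix (I × J) (I × J) ℂ, ρ.PosSemidef → Separable ρ →
    ∃ ρ' : Matrix (I × J) (I × J) ℂ, ρ'.PosSemidef ∧ Separable ρ' ∧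
      trB ρ' = E1 (trB ρ) ∧ trA ρ' = E2 (trA ρ) ∧
      (Matrix.trace (A * ρ)).re ≤ (Matrix.trace (B * ρ')).re

section Aux

variable {I J : Type*} [Fintype I] [Fintype J]

set_option linter.unusedSectionVars false

lemma kron_conjTranspose (A : Matrix I I ℂ) (B : Matrix J J ℂ) :
    (A ⊗ₖ B)ᴴ = Aᴴ ⊗ₖ Bᴴ := by
  ext ⟨i, j⟩ ⟨i', j'⟩
  simp [conjTranspose_apply, kroneckerMap_apply, mul_comm]

lemma psd_kron {A : Matrix I I ℂ} {B : Matrix J J ℂ}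
    (hA : A.PosSemidef) (hB : B.PosSemidef) : (A ⊗ₖ B).PosSemidef := by
  obtain ⟨a, ha⟩ := (by classical open scoped MatrixOrder Matrix.Norms.L2Operator in exact CStarAlgebra.nonneg_iff_eq_star_mul_self.mp hA.nonneg : ∃ X, _ = Xᴴ * X)
  obtain ⟨b, hb⟩ := (by classical open scoped MatrixOrder Matrix.Norms.L2Operator in exact CStarAlgebra.nonneg_iff_eq_star_mul_self.mp hB.nonneg : ∃ X, _ = Xᴴ * X)
  rw [ha, hb, Matrix.mul_kronecker_mul, ← kron_conjTranspose]
  exact Matrix.posSemidef_conjTranspose_mul_self _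

lemma psd_smul {c : ℂ} (hc : 0 ≤ c) {A : Matrix I I ℂ} (hA : A.PosSemidef) :
    (c • A).PosSemidef := by
  refine ⟨?_, fun x => ?_⟩
  · show _ = _
    rw [conjTranspose_smul, (IsSelfAdjoint.of_nonneg hc), hA.1]
  · exact (hA.smul hc).2 x

lemma psd_trace_nonneg {A : Matrix I I ℂ} (hA : A.PosSemidef) : 0 ≤ A.trace := by
  classical
  refine Finset.sum_nonneg fun i _ => ?_
  simpa [dotProduct, Pi.single_apply, apply_ite] using hA.dotProduct_mulVec_nonneg (Pi.single i 1)

lemma psd_trace_eq_zero {A : Matrix I I ℂ} (hA : A.PosSemidef)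
    (h : A.trace = 0) : A = 0 := by
  obtain ⟨B, hB⟩ := (by classical open scoped MatrixOrder Matrix.Norms.L2Operator in exact CStarAlgebra.nonneg_iff_eq_star_mul_self.mp hA.nonneg : ∃ X, _ = Xᴴ * X)
  suffices hB0 : B = 0 by simp [hB, hB0]
  rw [hB] at h
  ext i j
  have h' : ∑ i, ∑ j, Complex.normSq (B j i) = 0 := by
    have := congrArg Complex.re h
    simpa [Matrix.trace, Matrix.diag, Matrix.mul_apply, Complex.normSq,
      Complex.mul_re] using this
  have := (Finset.sum_eq_zero_iff_of_nonneg (fun i _ => Finset.sum_nonneg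
    (fun j _ => Complex.normSq_nonneg (B j i)))).mp h' j (Finset.mem_univ j)
  have := (Finset.sum_eq_zero_iff_of_nonneg (fun k _ =>
    Complex.normSq_nonneg (B k j))).mp this i (Finset.mem_univ i)
  simpa using Complex.normSq_eq_zero.mp this

lemma psd_trace_mul_nonneg {A B : Matrix I I ℂ}
    (hA : A.PosSemidef) (hB : B.PosSemidef) : 0 ≤ (A * B).trace := by
  obtain ⟨C, hC⟩ := (by classical open scoped MatrixOrder Matrix.Norms.L2Operator in exact CStarAlgebra.nonneg_iff_eq_star_mul_self.mp hB.nonneg : ∃ X, _ = Xᴴ * X)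
  rw [hC, ← Matrix.mul_assoc, Matrix.trace_mul_cycle]
  exact psd_trace_nonneg (hA.mul_mul_conjTranspose_same C)

lemma trB_kron (A : Matrix I I ℂ) (B : Matrix J J ℂ) :
    trB (A ⊗ₖ B) = B.trace • A := by
  ext i i'
  simp [trB, Matrix.trace, Matrix.diag, ← Finset.mul_sum, mul_comm]

lemma trA_kron (A : Matrix I I ℂ) (B : Matrix J J ℂ) :
    trA (A ⊗ₖ B) = A.trace • B := by
  ext j j'
  simp [trA, Matrix.trace, Matrix.diag, ← Finset.sum_mul, mul_comm]

lemma trB_sum {n : ℕ} (f : Fin n → Matrix (I × J) (I × J) ℂ) :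
    trB (∑ k, f k) = ∑ k, trB (f k) := by
  ext i i'
  simp only [trB, Matrix.of_apply, Finset.sum_apply, Matrix.sum_apply]
  exact Finset.sum_comm

lemma trA_sum {n : ℕ} (f : Fin n → Matrix (I × J) (I × J) ℂ) :
    trA (∑ k, f k) = ∑ k, trA (f k) := by
  ext j j'
  simp only [trA, Matrix.of_apply, Finset.sum_apply, Matrix.sum_apply]
  exact Finset.sum_comm

lemma trB_smul (c : ℂ) (M : Matrix (I × J) (I × J) ℂ) :
    trB (c • M) = c • trB M := by
  ext i i'
  simp [trB, Finset.mul_sum]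

lemma trA_smul (c : ℂ) (M : Matrix (I × J) (I × J) ℂ) :
    trA (c • M) = c • trA M := by
  ext j j'
  simp [trA, Finset.mul_sum]

lemma trace_trB (ρ : Matrix (I × J) (I × J) ℂ) : (trB ρ).trace = ρ.trace := by
  simp [trB, Matrix.trace, Matrix.diag, Fintype.sum_prod_type]

lemma trace_trA (ρ : Matrix (I × J) (I × J) ℂ) : (trA ρ).trace = ρ.trace := by
  simp only [trA, Matrix.trace, Matrix.diag, Matrix.of_apply, Fintype.sum_prod_type]
  exact Finset.sum_comm

lemma psd_trB {ρ : Matrix (I × J) (I × J) ℂ} (h : Separable ρ) :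
    (trB ρ).PosSemidef := by
  obtain ⟨n, σ, τ, hσ, hτ, rfl⟩ := h
  rw [trB_sum]
  refine Finset.sum_induction _ _ (fun a b ha hb => ha.add hb) .zero fun k _ => ?_
  rw [trB_kron]
  exact psd_smul (psd_trace_nonneg (hτ k)) (hσ k)

lemma psd_trA {ρ : Matrix (I × J) (I × J) ℂ} (h : Separable ρ) :
    (trA ρ).PosSemidef := by
  obtain ⟨n, σ, τ, hσ, hτ, rfl⟩ := h
  rw [trA_sum]
  refine Finset.sum_induction _ _ (fun a b ha hb => ha.add hb) .zero fun k _ => ?_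
  rw [trA_kron]
  exact psd_smul (psd_trace_nonneg (hσ k)) (hτ k)

end Aux

/-- Rule ExFalso: with zero preexpectation, any judgment holds, provided the
programs are trace-preserving (terminating) on positive semidefinite states. -/
theorem qRHL_exfalso {I J : Type*} [Fintype I] [Fintype J]
    (E1 : Matrix I I ℂ → Matrix I I ℂ) (E2 : Matrix J J ℂ → Matrix J J ℂ)
    (hE1 : ∀ ρ : Matrix I I ℂ, ρ.PosSemidef →
      (E1 ρ).PosSemidef ∧ Matrix.trace (E1 ρ) = Matrix.trace ρ)
    (hE2 : ∀ σ : Matrix J J ℂ, σ.PosSemidef →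
      (E2 σ).PosSemidef ∧ Matrix.trace (E2 σ) = Matrix.trace σ)
    (B : Matrix (I × J) (I × J) ℂ) (hB : B.PosSemidef) :
    qRHL 0 E1 E2 B := by
  intro ρ hρ hsep
  obtain ⟨hS1, hS2⟩ := hE1 (trB ρ) (psd_trB hsep)
  obtain ⟨hT1, hT2⟩ := hE2 (trA ρ) (psd_trA hsep)
  rw [trace_trB] at hS2
  rw [trace_trA] at hT2
  by_cases h0 : ρ.trace = 0
  · -- everything is zero
    have hE10 : E1 (trB ρ) = 0 := psd_trace_eq_zero hS1 (by rw [hS2, h0])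
    have hE20 : E2 (trA ρ) = 0 := psd_trace_eq_zero hT1 (by rw [hT2, h0])
    refine ⟨0, .zero, ⟨0, fun k => 0, fun k => 0, fun k => .zero, fun k => .zero, by simp⟩,
      ?_, ?_, by simp⟩
    · rw [hE10]; ext i i'; simp [trB]
    · rw [hE20]; ext j j'; simp [trA]
  · have htr : 0 ≤ ρ.trace := psd_trace_nonneg hρ
    set t := ρ.trace with ht_def
    have him : 0 ≤ t.re ∧ 0 = t.im := Complex.nonneg_iff.mp htr
    have ht : ((t.re : ℝ) : ℂ) = t := Complex.ext (by simp) (by simp [← him.2])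
    have hinv : 0 ≤ t⁻¹ := by
      rw [← ht, ← Complex.ofReal_inv]
      exact Complex.zero_le_real.mpr (inv_nonneg.mpr him.1)
    refine ⟨t⁻¹ • (E1 (trB ρ) ⊗ₖ E2 (trA ρ)), psd_smul hinv (psd_kron hS1 hT1),
      ⟨1, fun _ => t⁻¹ • E1 (trB ρ), fun _ => E2 (trA ρ), fun _ => psd_smul hinv hS1,
        fun _ => hT1, by rw [Fin.sum_univ_one, smul_kronecker]⟩, ?_, ?_, ?_⟩
    · rw [trB_smul, trB_kron, hT2, smul_smul, inv_mul_cancel₀ h0, one_smul]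
    · rw [trA_smul, trA_kron, hS2, smul_smul, inv_mul_cancel₀ h0, one_smul]
    · have := psd_trace_mul_nonneg hB (psd_smul hinv (psd_kron hS1 hT1))
      have hre := (Complex.nonneg_iff.mp this).1
      simpa using hre
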